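/- arXiv:2102.12356 — 3 statements merged into one kernel-verified Lean document; each statement's English description precedes it below -/
import Mathlib

section
/- Let A be an n×n real matrix that is weakly chained diagonally dominant: (i) for every row i, |A(i,i)| ≥ Σ_{j≠i} |A(i,j)|, and (ii) for every row r₀ there is a finite sequence of rows r₀, r₁, …, r_t with A(r_{i-1}, r_i) ≠ 0 for all 1 ≤ i ≤ t and |A(r_t,r_t)| > Σ_{j≠r_t} |A(r_t,j)|. Then A is nonsingular. -/
/-- A weakly chained diagonally dominant real matrix is nonsingular. -/
theorem stmt2 (n : ℕ) (A : Matrix (Fin n) (Fin n) ℝ)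
    (h1 : ∀ i, ∑ j ∈ Finset.univ.erase i, |A i j| ≤ |A i i|)
    (h2 : ∀ r0 : Fin n, ∃ (t : ℕ) (r : ℕ → Fin n), r 0 = r0 ∧
      (∀ i < t, A (r i) (r (i + 1)) ≠ 0) ∧
      ∑ j ∈ Finset.univ.erase (r t), |A (r t) j| < |A (r t) (r t)|) :
    A.det ≠ 0 := by
  intro hdet
  obtain ⟨v, hv0, hv⟩ := Matrix.exists_mulVec_eq_zero_iff.mpr hdet
  obtain ⟨i0, hi0⟩ := Function.ne_iff.mp hv0
  have hne : (Finset.univ : Finset (Fin n)).Nonempty := ⟨i0, Finset.mem_univ _⟩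
  set M := Finset.univ.sup' hne (fun i => |v i|) with hMdef
  have hMpos : 0 < M :=
    lt_of_lt_of_le (abs_pos.mpr hi0) (Finset.le_sup' (fun i => |v i|) (Finset.mem_univ i0))
  have hMle : ∀ j, |v j| ≤ M := fun j => Finset.le_sup' (fun i => |v i|) (Finset.mem_univ j)
  have key : ∀ i, |v i| = M →
      |A i i| * M ≤ ∑ j ∈ Finset.univ.erase i, |A i j| * |v j| := by
    intro i hi
    have h0 : ∑ j, A i j * v j = 0 := congrFun hv i
    rw [← Finset.sum_erase_add _ _ (Finset.mem_univ i)] at h0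
    have hAi : A i i * v i = -∑ j ∈ Finset.univ.erase i, A i j * v j := by
      linarith
    calc |A i i| * M = |A i i * v i| := by rw [abs_mul, hi]
      _ = |∑ j ∈ Finset.univ.erase i, A i j * v j| := by rw [hAi, abs_neg]
      _ ≤ ∑ j ∈ Finset.univ.erase i, |A i j * v j| := Finset.abs_sum_le_sum_abs _ _
      _ = ∑ j ∈ Finset.univ.erase i, |A i j| * |v j| := by simp [abs_mul]
  have hub : ∀ i, ∑ j ∈ Finset.univ.erase i, |A i j| * M ≤ |A i i| * M := by
    intro i
    rw [← Finset.sum_mul]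
    exact mul_le_mul_of_nonneg_right (h1 i) hMpos.le
  have closure : ∀ i j, |v i| = M → A i j ≠ 0 → |v j| = M := by
    intro i j hi hij
    by_cases hji : j = i
    · rw [hji]; exact hi
    have hle : ∀ k ∈ Finset.univ.erase i, |A i k| * |v k| ≤ |A i k| * M :=
      fun k _ => mul_le_mul_of_nonneg_left (hMle k) (abs_nonneg _)
    have hsum : ∑ k ∈ Finset.univ.erase i, |A i k| * |v k|
        = ∑ k ∈ Finset.univ.erase i, |A i k| * M := by
      have h3 := key i hi
      have h4 := Finset.sum_le_sum hle
      have h5 := hub i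
      linarith
    have heq := (Finset.sum_eq_sum_iff_of_le hle).mp hsum j
      (Finset.mem_erase.mpr ⟨hji, Finset.mem_univ j⟩)
    exact mul_left_cancel₀ (abs_ne_zero.mpr hij) heq
  obtain ⟨imax, _, hmax⟩ := Finset.exists_mem_eq_sup' hne (fun i => |v i|)
  obtain ⟨t, r, hr0, hchain, hstrict⟩ := h2 imax
  have hall : ∀ i ≤ t, |v (r i)| = M := by
    intro i
    induction i with
    | zero => intro _; rw [hr0]; exact hmax.symm
    | succ k ih =>
      intro hk
      exact closure _ _ (ih (Nat.le_of_succ_le hk)) (hchain k hk)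
  have ht := hall t le_rfl
  have h3 := key (r t) ht
  have h4 := Finset.sum_le_sum (fun k (_ : k ∈ Finset.univ.erase (r t)) =>
    mul_le_mul_of_nonneg_left (hMle k) (abs_nonneg (A (r t) k)))
  have h5 : ∑ k ∈ Finset.univ.erase (r t), |A (r t) k| * M
      < |A (r t) (r t)| * M := by
    rw [← Finset.sum_mul]
    exact mul_lt_mul_of_pos_right hstrict hMpos
  linarith
end

section
/- The set of values E_x[τ_cov] attainable over all finite irreducible Markov chains with rational transition probabilities and all start states x equals (Q ∩ [1,∞)) ∪ {0}. -/
open Finset ENNReal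

variable {Ω : Type*} [Fintype Ω] [DecidableEq Ω]

/-- `P` is a stochastic matrix: nonnegative entries, rows summing to 1. -/
def IsStochastic (P : Ω → Ω → ℝ) : Prop :=
  (∀ x y, 0 ≤ P x y) ∧ ∀ x, ∑ y, P x y = 1

/-- All transition probabilities are rational numbers. -/
def IsRationalKernel (P : Ω → Ω → ℝ) : Prop := ∀ x y, ∃ q : ℚ, P x y = (q : ℝ)

/-- `hitSurvive P S t x` is the probability that the chain with kernel `P` started
at `x` has not visited the set `S` by time `t`, i.e. `ℙ_x(τ_S > t)`. -/
def hitSurvive (P : Ω → Ω → ℝ) (S : Finset Ω) : ℕ → Ω → ℝ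
  | 0, x => if x ∈ S then 0 else 1
  | t + 1, x => if x ∈ S then 0 else ∑ y, P x y * hitSurvive P S t y

/-- The expected hitting time `𝔼_x[τ_S] = ∑_{t ≥ 0} ℙ_x(τ_S > t)`, as an
extended nonnegative real (so it may be `⊤ = ∞`). -/
noncomputable def hitExp (P : Ω → Ω → ℝ) (S : Finset Ω) (x : Ω) : ℝ≥0∞ :=
  ∑' t : ℕ, ENNReal.ofReal (hitSurvive P S t x)

/-- `covSurvive P t x A` : probability that, having currently visited exactly the
set `A` and standing at `x`, the chain has not covered `Ω` after `t` more steps. -/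
def covSurvive (P : Ω → Ω → ℝ) : ℕ → Ω → Finset Ω → ℝ
  | 0, _, A => if A = Finset.univ then 0 else 1
  | t + 1, x, A => if A = Finset.univ then 0 else
      ∑ y, P x y * covSurvive P t y (insert y A)

/-- The expected cover time `𝔼_x[τ_cov] = ∑_{t ≥ 0} ℙ_x(τ_cov > t)`. -/
noncomputable def covExp (P : Ω → Ω → ℝ) (x : Ω) : ℝ≥0∞ :=
  ∑' t : ℕ, ENNReal.ofReal (covSurvive P t x {x})

/-- `matPow P t x y` is the `t`-step transition probability `P^t(x,y)`. -/
def matPow (P : Ω → Ω → ℝ) : ℕ → Ω → Ω → ℝ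
  | 0 => fun a b => if a = b then 1 else 0
  | t + 1 => fun a c => ∑ b, P a b * matPow P t b c

/-- Irreducibility: every state can reach every state. -/
def IsIrreducibleChain (P : Ω → Ω → ℝ) : Prop := ∀ x y, ∃ t : ℕ, 0 < matPow P t x y

section basic

variable {P : Ω → Ω → ℝ}

lemma covSurvive_nonneg (h0 : ∀ x y, 0 ≤ P x y) :
    ∀ (t : ℕ) (x : Ω) (A : Finset Ω), 0 ≤ covSurvive P t x A := by
  intro t
  induction t with
  | zero => intro x A; simp only [covSurvive]; split <;> norm_num
  | succ t ih =>
    intro x A; simp only [covSurvive]; split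
    · exact le_refl 0
    · exact Finset.sum_nonneg fun y _ => mul_nonneg (h0 x y) (ih y _)

lemma covSurvive_le_one (hP : IsStochastic P) :
    ∀ (t : ℕ) (x : Ω) (A : Finset Ω), covSurvive P t x A ≤ 1 := by
  intro t
  induction t with
  | zero => intro x A; simp only [covSurvive]; split <;> norm_num
  | succ t ih =>
    intro x A; simp only [covSurvive]; split
    · norm_num
    · calc ∑ y, P x y * covSurvive P t y (insert y A) ≤ ∑ y, P x y * 1 :=
            Finset.sum_le_sum fun y _ => mul_le_mul_of_nonneg_left (ih y _) (hP.1 x y)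
        _ = 1 := by simpa using hP.2 x

lemma covSurvive_anti_set (hP : IsStochastic P) :
    ∀ (t : ℕ) (x : Ω) (A B : Finset Ω), A ⊆ B → covSurvive P t x B ≤ covSurvive P t x A := by
  intro t
  induction t with
  | zero =>
    intro x A B hAB; simp only [covSurvive]
    rcases eq_or_ne B Finset.univ with hB | hB
    · rw [if_pos hB]; split <;> norm_num
    · have hA : A ≠ Finset.univ := fun h => hB (Finset.univ_subset_iff.mp (h ▸ hAB))
      rw [if_neg hB, if_neg hA]
  | succ t ih =>
    intro x A B hAB; simp only [covSurvive]
    rcases eq_or_ne B Finset.univ with hB | hB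
    · rw [if_pos hB]; split
      · norm_num
      · exact Finset.sum_nonneg fun y _ => mul_nonneg (hP.1 x y) (covSurvive_nonneg hP.1 t y _)
    · have hA : A ≠ Finset.univ := fun h => hB (Finset.univ_subset_iff.mp (h ▸ hAB))
      rw [if_neg hB, if_neg hA]
      exact Finset.sum_le_sum fun y _ => mul_le_mul_of_nonneg_left
        (ih y _ _ (Finset.insert_subset_insert y hAB)) (hP.1 x y)

end basic

section basic2
variable {P : Ω → Ω → ℝ}

lemma covSurvive_succ_le (hP : IsStochastic P) :
    ∀ (t : ℕ) (x : Ω) (A : Finset Ω), covSurvive P (t + 1) x A ≤ covSurvive P t x A := by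
  intro t
  induction t with
  | zero =>
    intro x A
    simp only [covSurvive]; split
    · norm_num
    · calc ∑ y, P x y * covSurvive P 0 y (insert y A) ≤ ∑ y, P x y * 1 :=
          Finset.sum_le_sum fun y _ => mul_le_mul_of_nonneg_left
            (covSurvive_le_one hP 0 y _) (hP.1 x y)
        _ = 1 := by simpa using hP.2 x
  | succ t ih =>
    intro x A
    simp only [covSurvive]; split
    · norm_num
    · exact Finset.sum_le_sum fun y _ => mul_le_mul_of_nonneg_left (ih y _) (hP.1 x y)

lemma covSurvive_anti_time (hP : IsStochastic P) {s t : ℕ} (hst : s ≤ t) (x : Ω) (A : Finset Ω) :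
    covSurvive P t x A ≤ covSurvive P s x A := by
  induction t with
  | zero => simpa [Nat.le_zero.mp hst]
  | succ t ih =>
    rcases Nat.lt_or_ge s (t+1) with h | h
    · exact (covSurvive_succ_le hP t x A).trans (ih (Nat.lt_succ_iff.mp h))
    · have : s = t + 1 := le_antisymm hst h
      simp [this]

lemma matPow_nonneg (h0 : ∀ x y, 0 ≤ P x y) :
    ∀ (t : ℕ) (x y : Ω), 0 ≤ matPow P t x y := by
  intro t
  induction t with
  | zero => intro x y; simp only [matPow]; split <;> norm_num
  | succ t ih => intro x y; exact Finset.sum_nonneg fun b _ => mul_nonneg (h0 x b) (ih b y)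

lemma matPow_rowsum (hP : IsStochastic P) :
    ∀ (t : ℕ) (x : Ω), ∑ y, matPow P t x y = 1 := by
  intro t
  induction t with
  | zero => intro x; simp [matPow]
  | succ t ih =>
    intro x
    simp only [matPow]
    rw [Finset.sum_comm]
    have h : ∀ b, ∑ y, P x b * matPow P t b y = P x b := by
      intro b; rw [← Finset.mul_sum, ih b, mul_one]
    rw [Finset.sum_congr rfl fun b _ => h b]
    exact hP.2 x

/-- Markov decomposition bound (for `x ∈ A`). -/
lemma covSurvive_add_le (hP : IsStochastic P) :
    ∀ (s u : ℕ) (x : Ω) (A : Finset Ω), x ∈ A →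
      covSurvive P (s + u) x A ≤ ∑ y, matPow P s x y * covSurvive P u y (insert y A) := by
  intro s
  induction s with
  | zero =>
    intro u x A hx
    have : ∀ y, matPow P 0 x y * covSurvive P u y (insert y A)
        = if x = y then covSurvive P u y (insert y A) else 0 := by
      intro y; simp only [matPow]; split <;> simp
    rw [Finset.sum_congr rfl fun y _ => this y, Finset.sum_ite_eq Finset.univ x _]
    simp only [Finset.mem_univ, if_pos]
    rw [Finset.insert_eq_self.mpr hx]
    simpa using le_refl _
  | succ s ih =>
    intro u x A hx
    have key : covSurvive P (s + 1 + u) x A = covSurvive P ((s + u) + 1) x A := by ring_nf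
    rw [key]
    simp only [covSurvive]
    split
    · exact Finset.sum_nonneg fun y _ => mul_nonneg (matPow_nonneg hP.1 _ x y)
        (covSurvive_nonneg hP.1 _ y _)
    · calc ∑ y, P x y * covSurvive P (s + u) y (insert y A)
          ≤ ∑ y, P x y * ∑ w, matPow P s y w * covSurvive P u w (insert w (insert y A)) :=
            Finset.sum_le_sum fun y _ => mul_le_mul_of_nonneg_left
              (ih u y (insert y A) (Finset.mem_insert_self y A)) (hP.1 x y)
        _ ≤ ∑ y, P x y * ∑ w, matPow P s y w * covSurvive P u w (insert w A) := by
            refine Finset.sum_le_sum fun y _ => mul_le_mul_of_nonneg_left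
              (Finset.sum_le_sum fun w _ => mul_le_mul_of_nonneg_left ?_
                (matPow_nonneg hP.1 s y w)) (hP.1 x y)
            exact covSurvive_anti_set hP u w _ _
              (Finset.insert_subset_insert w (Finset.subset_insert y A))
        _ = ∑ w, matPow P (s+1) x w * covSurvive P u w (insert w A) := by
            simp only [matPow, Finset.mul_sum, Finset.sum_mul]
            rw [Finset.sum_comm]
            exact Finset.sum_congr rfl fun w _ => Finset.sum_congr rfl fun y _ => by ring

end basic2

section cover
variable {P : Ω → Ω → ℝ}

lemma exists_covSurvive_lt_one (hP : IsStochastic P) (hirr : IsIrreducibleChain P) :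
    ∀ (A : Finset Ω) (x : Ω), x ∈ A → ∃ t, covSurvive P t x A < 1 := by
  suffices h : ∀ (n : ℕ) (A : Finset Ω), (Finset.univ \ A).card = n →
      ∀ x ∈ A, ∃ t, covSurvive P t x A < 1 by
    intro A x hx; exact h _ A rfl x hx
  intro n
  induction n using Nat.strong_induction_on with
  | _ n ih =>
  intro A hn x hx
  rcases eq_or_ne A Finset.univ with hA | hA
  · exact ⟨0, by simp [covSurvive, hA]⟩
  · obtain ⟨z, hz⟩ : (Finset.univ \ A).Nonempty :=
      Finset.sdiff_nonempty.mpr fun h => hA (Finset.univ_subset_iff.mp h)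
    have hzA : z ∉ A := (Finset.mem_sdiff.mp hz).2
    obtain ⟨s, hs⟩ := hirr x z
    have hcard : (Finset.univ \ insert z A).card < n := by
      rw [← hn]
      refine Finset.card_lt_card ?_
      rw [Finset.ssubset_iff_of_subset (Finset.sdiff_subset_sdiff le_rfl (Finset.subset_insert z A))]
      exact ⟨z, hz, by simp⟩
    obtain ⟨u, hu⟩ := ih _ hcard (insert z A) rfl z (Finset.mem_insert_self z A)
    refine ⟨s + u, ?_⟩
    have hb := covSurvive_add_le hP s u x A hx
    have hsplit : ∑ y, matPow P s x y * covSurvive P u y (insert y A)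
        ≤ (∑ y, matPow P s x y) - matPow P s x z * (1 - covSurvive P u z (insert z A)) := by
      have : ∀ y, matPow P s x y * covSurvive P u y (insert y A)
          ≤ matPow P s x y - (if y = z then matPow P s x z * (1 - covSurvive P u z (insert z A)) else 0) := by
        intro y
        split
        · rename_i h; subst h
          have := covSurvive_le_one hP u y (insert y A)
          nlinarith [matPow_nonneg hP.1 s x y]
        · have h1 := covSurvive_le_one hP u y (insert y A)
          nlinarith [matPow_nonneg hP.1 s x y]
      calc ∑ y, matPow P s x y * covSurvive P u y (insert y A)
          ≤ ∑ y, (matPow P s x y - (if y = z then matPow P s x z * (1 - covSurvive P u z (insert z A)) else 0)) :=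
            Finset.sum_le_sum fun y _ => this y
        _ = (∑ y, matPow P s x y) - matPow P s x z * (1 - covSurvive P u z (insert z A)) := by
            rw [Finset.sum_sub_distrib, Finset.sum_ite_eq' Finset.univ z]
            simp
    have h1 : covSurvive P (s + u) x A ≤ 1 - matPow P s x z * (1 - covSurvive P u z (insert z A)) := by
      rw [matPow_rowsum hP s x] at hsplit
      linarith
    have hpos : 0 < matPow P s x z * (1 - covSurvive P u z (insert z A)) :=
      mul_pos hs (by linarith)
    linarith

end cover

section decay
variable [Nonempty Ω] {P : Ω → Ω → ℝ}

noncomputable def covMax (P : Ω → Ω → ℝ) (t : ℕ) : ℝ :=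
  Finset.univ.sup' Finset.univ_nonempty
    (fun p : Ω × Finset Ω => covSurvive P t p.1 (insert p.1 p.2))

lemma covSurvive_le_covMax (t : ℕ) {x : Ω} {A : Finset Ω} (hx : x ∈ A) :
    covSurvive P t x A ≤ covMax P t := by
  have := Finset.le_sup' (f := fun p : Ω × Finset Ω => covSurvive P t p.1 (insert p.1 p.2))
    (Finset.mem_univ (x, A))
  rwa [Finset.insert_eq_self.mpr hx] at this

lemma covMax_nonneg (h0 : ∀ x y, 0 ≤ P x y) (t : ℕ) : 0 ≤ covMax P t := by
  obtain ⟨x⟩ := ‹Nonempty Ω›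
  exact le_trans (covSurvive_nonneg h0 t x _)
    (covSurvive_le_covMax t (Finset.mem_insert_self x ∅))

lemma covSurvive_univ (t : ℕ) (x : Ω) : covSurvive P t x Finset.univ = 0 := by
  cases t <;> simp [covSurvive]

lemma covSurvive_add_le_covMax_mul (hP : IsStochastic P) (t : ℕ) :
    ∀ (s : ℕ) (x : Ω) (A : Finset Ω), x ∈ A →
      covSurvive P (s + t) x A ≤ covMax P t * covSurvive P s x A := by
  intro s
  induction s with
  | zero =>
    intro x A hx
    rw [Nat.zero_add]
    rcases eq_or_ne A Finset.univ with h | h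
    · subst h
      rw [covSurvive_univ, covSurvive_univ, mul_zero]
    · have h1 : covSurvive P 0 x A = 1 := by simp [covSurvive, h]
      rw [h1, mul_one]; exact covSurvive_le_covMax t hx
  | succ s ih =>
    intro x A hx
    have key : s + 1 + t = (s + t) + 1 := by ring
    rw [key]
    show covSurvive P ((s+t)+1) x A ≤ covMax P t * covSurvive P (s+1) x A
    rcases eq_or_ne A Finset.univ with h | h
    · subst h
      rw [covSurvive_univ, covSurvive_univ, mul_zero]
    · simp only [covSurvive, if_neg h]
      rw [Finset.mul_sum]
      refine Finset.sum_le_sum fun y _ => ?_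
      calc P x y * covSurvive P (s + t) y (insert y A)
          ≤ P x y * (covMax P t * covSurvive P s y (insert y A)) :=
            mul_le_mul_of_nonneg_left (ih y _ (Finset.mem_insert_self y A)) (hP.1 x y)
        _ = covMax P t * (P x y * covSurvive P s y (insert y A)) := by ring

lemma covSurvive_le_covMax_pow (hP : IsStochastic P) (N : ℕ) :
    ∀ (k : ℕ) (x : Ω) (A : Finset Ω), x ∈ A →
      covSurvive P (k * N) x A ≤ covMax P N ^ k := by
  intro k
  induction k with
  | zero => intro x A hx; simpa using covSurvive_le_one hP 0 x A
  | succ k ih =>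
    intro x A hx
    have key : (k + 1) * N = k * N + N := by ring
    rw [key, pow_succ, mul_comm (covMax P N ^ k) (covMax P N)]
    calc covSurvive P (k * N + N) x A ≤ covMax P N * covSurvive P (k * N) x A :=
          covSurvive_add_le_covMax_mul hP N (k * N) x A hx
      _ ≤ covMax P N * covMax P N ^ k :=
          mul_le_mul_of_nonneg_left (ih x A hx) (covMax_nonneg hP.1 N)

lemma exists_decay (hP : IsStochastic P) (hirr : IsIrreducibleChain P) :
    ∃ N : ℕ, 1 ≤ N ∧ covMax P N < 1 := by
  have hchoice : ∀ p : Ω × Finset Ω, ∃ t, covSurvive P t p.1 (insert p.1 p.2) < 1 :=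
    fun p => exists_covSurvive_lt_one hP hirr _ _ (Finset.mem_insert_self p.1 p.2)
  choose f hf using hchoice
  refine ⟨(Finset.univ.sup f) + 1, Nat.le_add_left 1 _, ?_⟩
  rw [covMax, Finset.sup'_lt_iff]
  intro p _
  calc covSurvive P (Finset.univ.sup f + 1) p.1 (insert p.1 p.2)
      ≤ covSurvive P (f p) p.1 (insert p.1 p.2) :=
        covSurvive_anti_time hP (le_trans (Finset.le_sup (Finset.mem_univ p)) (Nat.le_succ _)) _ _
    _ < 1 := hf p

lemma geom_partial_le {r : ℝ} (h0 : 0 ≤ r) (h1 : r < 1) (n : ℕ) :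
    ∑ i ∈ Finset.range n, r ^ i ≤ (1 - r)⁻¹ := by
  rw [geom_sum_eq (by linarith : r ≠ 1) n, div_le_iff_of_neg (by linarith : r - 1 < 0)]
  have h2 : (1 - r)⁻¹ * (r - 1) = -1 := by
    rw [inv_mul_eq_div, div_eq_iff (by linarith : (1:ℝ) - r ≠ 0)]; ring
  have := pow_nonneg h0 n
  linarith

lemma summable_covSurvive (hP : IsStochastic P) (hirr : IsIrreducibleChain P)
    (x : Ω) (A : Finset Ω) (hx : x ∈ A) :
    Summable fun t => covSurvive P t x A := by
  obtain ⟨N, hN1, hNlt⟩ := exists_decay hP hirr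
  set r := covMax P N with hr
  have hr0 : 0 ≤ r := covMax_nonneg hP.1 N
  have hbound : ∀ t, covSurvive P t x A ≤ r ^ (t / N) := by
    intro t
    calc covSurvive P t x A ≤ covSurvive P (t / N * N) x A :=
          covSurvive_anti_time hP (Nat.div_mul_le_self t N) x A
      _ ≤ r ^ (t / N) := covSurvive_le_covMax_pow hP N (t / N) x A hx
  have hsum : Summable fun t : ℕ => r ^ (t / N) := by
    refine summable_of_sum_range_le (c := (N : ℝ) * (1 - r)⁻¹)
      (fun t => pow_nonneg hr0 _) fun n => ?_
    have hstep : ∀ m : ℕ, ∑ t ∈ Finset.range (m * N), r ^ (t / N)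
        = (∑ k ∈ Finset.range m, r ^ k) * N := by
      intro m
      induction m with
      | zero => simp
      | succ m ihm =>
        have hm : (m + 1) * N = m * N + N := by ring
        rw [hm, Finset.sum_range_add, ihm]
        have hj' : ∀ j ∈ Finset.range N, r ^ ((m * N + j) / N) = r ^ m := by
          intro j hj
          congr 1
          have : m * N + j = j + N * m := by ring
          rw [this, Nat.add_mul_div_left _ _ (by omega : 0 < N),
            Nat.div_eq_of_lt (Finset.mem_range.mp hj), Nat.zero_add]
        rw [Finset.sum_congr rfl hj', Finset.sum_const, Finset.card_range,
          Finset.sum_range_succ, nsmul_eq_mul]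
        push_cast; ring
    calc ∑ t ∈ Finset.range n, r ^ (t / N)
        ≤ ∑ t ∈ Finset.range (n * N), r ^ (t / N) := by
          refine Finset.sum_le_sum_of_subset_of_nonneg ?_ fun t _ _ => pow_nonneg hr0 _
          exact Finset.range_subset_range.mpr (Nat.le_mul_of_pos_right n (by omega))
      _ = (∑ k ∈ Finset.range n, r ^ k) * N := hstep n
      _ ≤ (1 - r)⁻¹ * N := by
          refine mul_le_mul_of_nonneg_right (geom_partial_le hr0 hNlt n) (by positivity)
      _ = (N : ℝ) * (1 - r)⁻¹ := by ring
  exact Summable.of_nonneg_of_le (covSurvive_nonneg hP.1 · x A) hbound hsum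

end decay

section ratpart
variable [Nonempty Ω] {P : Ω → Ω → ℝ}

lemma tsum_covSurvive_rat (hP : IsStochastic P) (hrat : IsRationalKernel P)
    (hirr : IsIrreducibleChain P) (x₀ : Ω) (A₀ : Finset Ω) (hx₀ : x₀ ∈ A₀) :
    ∃ q : ℚ, ∑' t, covSurvive P t x₀ A₀ = (q : ℝ) := by
  classical
  choose Pq hPq using hrat
  set Q : Matrix (Ω × Finset Ω) (Ω × Finset Ω) ℝ := Matrix.of (fun i j =>
    if insert i.1 i.2 ≠ Finset.univ ∧ j.2 = insert i.1 i.2 then P i.1 j.1 else 0) with hQdef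
  set Qq : Matrix (Ω × Finset Ω) (Ω × Finset Ω) ℚ := Matrix.of (fun i j =>
    if insert i.1 i.2 ≠ Finset.univ ∧ j.2 = insert i.1 i.2 then Pq i.1 j.1 else 0) with hQqdef
  have hQcast : ∀ i j, ((Qq i j : ℚ) : ℝ) = Q i j := by
    intro i j
    rw [hQdef, hQqdef]
    by_cases h : insert i.1 i.2 ≠ Finset.univ ∧ j.2 = insert i.1 i.2
    · simp only [Matrix.of_apply, if_pos h]; exact (hPq i.1 j.1).symm
    · simp only [Matrix.of_apply, if_neg h]; norm_num
  have hQnn : ∀ i j, 0 ≤ Q i j := by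
    intro i j; rw [hQdef]; simp only [Matrix.of_apply]
    split
    · exact hP.1 _ _
    · exact le_refl 0
  -- mulVec formula
  have hmul : ∀ (f : (Ω × Finset Ω) → ℝ) (i : Ω × Finset Ω), Q.mulVec f i =
      if insert i.1 i.2 = Finset.univ then 0
      else ∑ y, P i.1 y * f (y, insert i.1 i.2) := by
    intro f i
    have : Q.mulVec f i = ∑ j, Q i j * f j := rfl
    rw [this, Fintype.sum_prod_type]
    by_cases h : insert i.1 i.2 = Finset.univ
    · rw [if_pos h]
      refine Finset.sum_eq_zero fun y _ => Finset.sum_eq_zero fun B _ => ?_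
      rw [hQdef]; simp [h]
    · rw [if_neg h]
      refine Finset.sum_congr rfl fun y _ => ?_
      rw [Finset.sum_eq_single (insert i.1 i.2)]
      · rw [hQdef]; simp [h]
      · intro B _ hB
        rw [hQdef]; simp only [Matrix.of_apply]
        rw [if_neg (fun hc => hB hc.2), zero_mul]
      · intro hB; exact absurd (Finset.mem_univ _) hB
  set g : ℕ → (Ω × Finset Ω) → ℝ := fun t i => covSurvive P t i.1 (insert i.1 i.2) with hgdef
  have hg0 : ∀ i, g 0 i = if insert i.1 i.2 = Finset.univ then 0 else 1 := fun i => rfl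
  have hgrec : ∀ t, g (t + 1) = Q.mulVec (g t) := by
    intro t
    funext i
    rw [hmul]
    show covSurvive P (t+1) i.1 (insert i.1 i.2) = _
    simp only [covSurvive]
    rfl
  have hgsummable : ∀ i, Summable fun t => g t i := fun i =>
    summable_covSurvive hP hirr i.1 (insert i.1 i.2) (Finset.mem_insert_self _ _)
  -- the vector of expected values
  set e : (Ω × Finset Ω) → ℝ := fun i => ∑' t, g t i with hedef
  have heq : (1 - Q).mulVec e = g 0 := by
    funext i
    rw [Matrix.sub_mulVec, Matrix.one_mulVec]
    have h1 : e i = g 0 i + ∑' t, g (t + 1) i := Summable.tsum_eq_zero_add (hgsummable i)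
    have h2 : ∑' t, g (t + 1) i = Q.mulVec e i := by
      have hrw : ∀ t : ℕ, g (t+1) i = ∑ j, Q i j * g t j := by
        intro t; rw [hgrec t]; rfl
      rw [tsum_congr hrw, Summable.tsum_finsetSum (fun j _ => (hgsummable j).mul_left (Q i j))]
      have : ∀ j, ∑' t, Q i j * g t j = Q i j * e j := fun j => (hgsummable j).tsum_mul_left _
      rw [Finset.sum_congr rfl fun j _ => this j]
      rfl
    have : (e - Q.mulVec e) i = e i - Q.mulVec e i := rfl
    rw [this, h1, h2]
    ring
  -- trivial kernel
  have hker : ∀ v : (Ω × Finset Ω) → ℝ, (1 - Q).mulVec v = 0 → v = 0 := by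
    intro v hv
    have hfix : v = Q.mulVec v := by
      funext i
      have := congrFun hv i
      rw [Matrix.sub_mulVec, Matrix.one_mulVec] at this
      have h2 : v i - Q.mulVec v i = 0 := this
      linarith [h2]
    have hpow : ∀ t : ℕ, v = (Q ^ (t + 1)).mulVec v := by
      intro t
      induction t with
      | zero => rw [pow_one]; exact hfix
      | succ t ih =>
        nth_rewrite 1 [hfix]
        nth_rewrite 1 [ih]
        rw [Matrix.mulVec_mulVec, ← pow_succ']
    have hpnn : ∀ t i j, 0 ≤ (Q ^ t) i j := by
      intro t
      induction t with
      | zero => intro i j; rw [pow_zero]; simp [Matrix.one_apply]; split <;> norm_num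
      | succ t ih =>
        intro i j
        rw [pow_succ]
        exact Finset.sum_nonneg fun k _ => mul_nonneg (ih i k) (hQnn k j)
    have hrowsum : ∀ t i, ∑ j, (Q ^ (t + 1)) i j = g t i := by
      have hmv1 : ∀ t : ℕ, (Q ^ (t+1)).mulVec (fun _ => (1:ℝ)) = g t := by
        intro t
        induction t with
        | zero =>
          rw [pow_one]
          funext i
          rw [hmul]
          rw [hg0]
          split
          · rfl
          · simpa using hP.2 i.1
        | succ t ih =>
          rw [pow_succ', ← Matrix.mulVec_mulVec, ih, ← hgrec]
      intro t i
      have := congrFun (hmv1 t) i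
      rw [← this]
      show _ = ∑ j, (Q ^ (t+1)) i j * 1
      simp
    set C : ℝ := ∑ j, |v j| with hC
    have hvleC : ∀ j, |v j| ≤ C := by
      intro j
      rw [hC]
      exact Finset.single_le_sum (fun k _ => abs_nonneg (v k)) (Finset.mem_univ j)
    have hbound : ∀ t i, |v i| ≤ g t i * C := by
      intro t i
      have h1 : v i = ∑ j, (Q ^ (t+1)) i j * v j := by
        have := congrFun (hpow t) i
        rw [this]; rfl
      rw [h1]
      calc |∑ j, (Q ^ (t+1)) i j * v j| ≤ ∑ j, |(Q ^ (t+1)) i j * v j| :=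
            Finset.abs_sum_le_sum_abs _ _
        _ ≤ ∑ j, (Q ^ (t+1)) i j * C := by
            refine Finset.sum_le_sum fun j _ => ?_
            rw [abs_mul, abs_of_nonneg (hpnn (t+1) i j)]
            exact mul_le_mul_of_nonneg_left (hvleC j) (hpnn (t+1) i j)
        _ = g t i * C := by rw [← Finset.sum_mul, hrowsum t i]
    funext i
    have htend : Filter.Tendsto (fun t => g t i * C) Filter.atTop (nhds 0) := by
      have := (hgsummable i).tendsto_atTop_zero
      simpa using this.mul_const C
    have : |v i| ≤ 0 := ge_of_tendsto' htend (fun t => hbound t i)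
    have : v i = 0 := abs_nonpos_iff.mp this
    simpa using this
  -- determinant nonzero
  have hdet : (1 - Q).det ≠ 0 := by
    intro h
    obtain ⟨v, hv0, hv⟩ := (Matrix.exists_mulVec_eq_zero_iff).mpr h
    exact hv0 (hker v hv)
  have hdetq : (1 - Qq).det ≠ 0 := by
    intro h
    apply hdet
    have hmap : (1 - Qq).map (⇑(Rat.castHom ℝ)) = 1 - Q := by
      ext i j
      simp only [Matrix.map_apply, Matrix.sub_apply, Matrix.one_apply, Rat.coe_castHom]
      push_cast
      rw [hQcast]
      split <;> ring
    have := RingHom.map_det (Rat.castHom ℝ) (1 - Qq)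
    rw [RingHom.mapMatrix_apply] at this
    rw [← hmap, ← this, h]
    simp
  -- rational solution
  set g0q : (Ω × Finset Ω) → ℚ := fun i => if insert i.1 i.2 = Finset.univ then 0 else 1 with hg0q
  set eq : (Ω × Finset Ω) → ℚ := (1 - Qq)⁻¹.mulVec g0q with heqdef
  have hqsol : (1 - Qq).mulVec eq = g0q := by
    rw [heqdef, Matrix.mulVec_mulVec, Matrix.mul_nonsing_inv _ (isUnit_iff_ne_zero.mpr hdetq),
      Matrix.one_mulVec]
  -- cast solution solves real system
  have hcastsol : (1 - Q).mulVec (fun i => ((eq i : ℚ) : ℝ)) = g 0 := by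
    funext i
    have h1 : (1 - Q).mulVec (fun i => ((eq i : ℚ) : ℝ)) i
        = ∑ j, (1 - Q) i j * ((eq j : ℚ) : ℝ) := rfl
    have h2 : ∀ j, (1 - Q) i j = (((1 - Qq) i j : ℚ) : ℝ) := by
      intro j
      simp only [Matrix.sub_apply, Matrix.one_apply]
      push_cast
      rw [hQcast]
      split <;> ring
    rw [h1, Finset.sum_congr rfl fun j _ => by rw [h2 j]]
    have h3 : ∑ j, (((1 - Qq) i j : ℚ) : ℝ) * ((eq j : ℚ) : ℝ)
        = (((∑ j, (1 - Qq) i j * eq j : ℚ)) : ℝ) := by push_cast; rfl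
    rw [h3]
    have h4 : ∑ j, (1 - Qq) i j * eq j = g0q i := congrFun hqsol i
    rw [h4, hg0, hg0q]
    by_cases hc : insert i.1 i.2 = Finset.univ <;> simp [hc]
  -- uniqueness
  have hdiff : (1 - Q).mulVec (e - fun i => ((eq i : ℚ) : ℝ)) = 0 := by
    rw [Matrix.mulVec_sub, heq, hcastsol, sub_self]
  have hfinal : e = fun i => ((eq i : ℚ) : ℝ) := by
    have := hker _ hdiff
    funext i
    have h5 := congrFun this i
    have : e i - ((eq i : ℚ) : ℝ) = 0 := h5
    linarith
  refine ⟨eq (x₀, A₀), ?_⟩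
  have h6 := congrFun hfinal (x₀, A₀)
  rw [hedef] at h6
  simp only at h6
  rw [hgdef] at h6
  simp only [Finset.insert_eq_self.mpr hx₀] at h6
  exact h6

end ratpart

section final

lemma covExp_eq_zero_of_fin1 (P : Fin 1 → Fin 1 → ℝ) (x : Fin 1) : covExp P x = 0 := by
  have h : ({x} : Finset (Fin 1)) = Finset.univ :=
    Finset.eq_univ_of_card _ (by simp)
  have : ∀ t, covSurvive P t x {x} = 0 := by
    intro t; rw [h]; exact covSurvive_univ t x
  simp [covExp, this]

/-- The set of cover times attainable by finite irreducible rational Markov chains is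
`(ℚ ∩ [1, ∞)) ∪ {0}`. -/
theorem stmt8 :
    {c : ℝ≥0∞ | ∃ (n : ℕ) (P : Fin (n + 1) → Fin (n + 1) → ℝ) (x : Fin (n + 1)),
        IsStochastic P ∧ IsRationalKernel P ∧ IsIrreducibleChain P ∧ c = covExp P x}
      = {c : ℝ≥0∞ | ∃ q : ℚ, 1 ≤ q ∧ c = ENNReal.ofReal (q : ℝ)} ∪ {0} := by
  ext c
  simp only [Set.mem_setOf_eq, Set.mem_union, Set.mem_singleton_iff]
  constructor
  · rintro ⟨n, P, x, hP, hrat, hirr, rfl⟩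
    rcases Nat.eq_zero_or_pos n with hn | hn
    · subst hn
      right
      exact covExp_eq_zero_of_fin1 P x
    · left
      obtain ⟨q, hq⟩ := tsum_covSurvive_rat hP hrat hirr x {x} (Finset.mem_singleton_self x)
      have hsum : Summable fun t => covSurvive P t x {x} :=
        summable_covSurvive hP hirr x {x} (Finset.mem_singleton_self x)
      have hne : ({x} : Finset (Fin (n+1))) ≠ Finset.univ := by
        intro h
        have := congrArg Finset.card h
        simp at this
        omega
      have h0 : covSurvive P 0 x {x} = 1 := by simp [covSurvive, hne]
      have hq1 : (1 : ℝ) ≤ (q : ℝ) := by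
        rw [← hq, Summable.tsum_eq_zero_add hsum, h0]
        have := tsum_nonneg (L := SummationFilter.unconditional ℕ) (fun t => covSurvive_nonneg hP.1 (t+1) x ({x} : Finset (Fin (n+1))))
        linarith
      refine ⟨q, by exact_mod_cast hq1, ?_⟩
      rw [covExp, ← ENNReal.ofReal_tsum_of_nonneg (fun t => covSurvive_nonneg hP.1 t x {x}) hsum,
        hq]
  · rintro (⟨q, hq1, rfl⟩ | rfl)
    · -- two-state chain realizing q
      set p : ℝ := ((q : ℝ))⁻¹ with hp
      have hq0 : (0 : ℝ) < q := by exact_mod_cast lt_of_lt_of_le one_pos hq1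
      have hq1' : (1 : ℝ) ≤ (q : ℝ) := by exact_mod_cast hq1
      have hp0 : 0 < p := by positivity
      have hp1 : p ≤ 1 := by
        rw [hp]; exact inv_le_one_of_one_le₀ hq1'
      set P : Fin 2 → Fin 2 → ℝ := fun a b =>
        if a = 0 then (if b = 0 then 1 - p else p) else (if b = 0 then 1 else 0) with hPdef
      have e00 : P 0 0 = 1 - p := by simp [hPdef]
      have e01 : P 0 1 = p := by norm_num [hPdef]
      have e10 : P 1 0 = 1 := by norm_num [hPdef]
      have e11 : P 1 1 = 0 := by norm_num [hPdef]
      have hP : IsStochastic P := by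
        constructor
        · intro a b
          rw [hPdef]
          by_cases ha : a = 0 <;> by_cases hb : b = 0 <;> simp [ha, hb] <;> linarith
        · intro a
          rcases Fin.exists_fin_two.mp ⟨a, rfl⟩ with h | h <;> subst h <;>
            rw [Fin.sum_univ_two]
          · rw [e00, e01]; ring
          · rw [e10, e11]; ring
      have hrat : IsRationalKernel P := by
        intro a b
        rcases Fin.exists_fin_two.mp ⟨a, rfl⟩ with ha | ha <;>
          rcases Fin.exists_fin_two.mp ⟨b, rfl⟩ with hb | hb <;> subst ha <;> subst hb
        · exact ⟨1 - q⁻¹, by rw [e00]; push_cast; rw [hp]⟩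
        · exact ⟨q⁻¹, by rw [e01]; push_cast; rw [hp]⟩
        · exact ⟨1, by rw [e10]; norm_num⟩
        · exact ⟨0, by rw [e11]; norm_num⟩
      have hirr : IsIrreducibleChain P := by
        intro a b
        by_cases hab : a = b
        · exact ⟨0, by subst hab; simp [matPow]⟩
        · refine ⟨1, ?_⟩
          have hm : matPow P 1 a b = ∑ y, P a y * matPow P 0 y b := rfl
          rcases Fin.exists_fin_two.mp ⟨a, rfl⟩ with ha | ha <;>
            rcases Fin.exists_fin_two.mp ⟨b, rfl⟩ with hb | hb <;> subst ha <;> subst hb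
          · exact absurd rfl hab
          · rw [hm, Fin.sum_univ_two, e00, e01]
            simp [matPow]
            linarith
          · rw [hm, Fin.sum_univ_two, e10, e11]
            simp [matPow]
          · exact absurd rfl hab
      refine ⟨1, P, 0, hP, hrat, hirr, ?_⟩
      have hgeo : ∀ t, covSurvive P t 0 ({0} : Finset (Fin 2)) = (1 - p) ^ t := by
        intro t
        induction t with
        | zero =>
          have hne : ({0} : Finset (Fin 2)) ≠ Finset.univ := by decide
          simp [covSurvive, hne]
        | succ t ih =>
          have hne : ({0} : Finset (Fin 2)) ≠ Finset.univ := by decide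
          have h1 : insert (0 : Fin 2) ({0} : Finset (Fin 2)) = {0} := by decide
          have h2 : insert (1 : Fin 2) ({0} : Finset (Fin 2)) = Finset.univ := by decide
          show (if ({0} : Finset (Fin 2)) = Finset.univ then (0:ℝ) else
            ∑ y, P 0 y * covSurvive P t y (insert y {0})) = (1 - p) ^ (t+1)
          rw [if_neg hne, Fin.sum_univ_two, h1, h2, covSurvive_univ, ih, e00, e01]
          ring
      have hsum2 : Summable fun t : ℕ => (1 - p) ^ t :=
        summable_geometric_of_lt_one (by linarith) (by linarith)
      rw [covExp]
      have : ∀ t, ENNReal.ofReal (covSurvive P t 0 {0}) = ENNReal.ofReal ((1-p)^t) :=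
        fun t => by rw [hgeo t]
      rw [tsum_congr this,
        ← ENNReal.ofReal_tsum_of_nonneg (fun t => pow_nonneg (by linarith) t) hsum2,
        tsum_geometric_of_lt_one (by linarith) (by linarith)]
      congr 1
      have hh : (1:ℝ) - (1 - p) = p := by ring
      rw [hh, hp, inv_inv]
    · exact ⟨0, fun _ _ => 1, 0, ⟨fun _ _ => one_pos.le, fun x => by simp⟩,
        fun _ _ => ⟨1, by norm_num⟩,
        fun x y => ⟨0, by have hxy : x = y := by omega
                          subst hxy; simp [matPow]⟩,
        (covExp_eq_zero_of_fin1 _ _).symm⟩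

end final
end

section
/- Let P be a Markov chain with rational transition probabilities on a finite state space Ω, and suppose E_x[τ_cov] < ∞. Then E_x[τ_cov] equals the expected hitting time E_{(x,{x})}^Q[τ_C] in the auxiliary chain Q(P,1) on V = {(y,S) : S ⊆ Ω, y ∈ S}, where C = {(y,Ω) : y ∈ Ω}, and this hitting time is rational. -/
open Finset ENNReal

variable {Ω : Type*} [Fintype Ω] [DecidableEq Ω]

/-- State space of the `k`-walk auxiliary chain: tuples of positions together with a
visited set containing all current positions. -/
abbrev AuxState (Ω : Type*) [Fintype Ω] [DecidableEq Ω] (k : ℕ) :=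
  {p : (Fin k → Ω) × Finset Ω // ∀ j, p.1 j ∈ p.2}

/-- Transition matrix of the `k`-walk auxiliary chain `Q(P,k)`:
`Q((x,S),(y, S ∪ {y⁽¹⁾,…,y⁽ᵏ⁾})) = ∏_j P(x⁽ʲ⁾, y⁽ʲ⁾)`, and `0` otherwise. -/
def auxQ (P : Ω → Ω → ℝ) (k : ℕ) : AuxState Ω k → AuxState Ω k → ℝ :=
  fun v w =>
    if w.1.2 = v.1.2 ∪ Finset.univ.image w.1.1 then ∏ j, P (v.1.1 j) (w.1.1 j) else 0

/-- Generic survival function `ℙ_v(τ_C > t)` for the chain `Q` on a finite state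
space `V` and target set `C`. -/
def hitSurviveGen {V : Type*} [Fintype V] [DecidableEq V]
    (Q : V → V → ℝ) (C : Finset V) : ℕ → V → ℝ
  | 0, v => if v ∈ C then 0 else 1
  | t + 1, v => if v ∈ C then 0 else ∑ w, Q v w * hitSurviveGen Q C t w

/-- Generic expected hitting time `𝔼_v[τ_C]` for the chain `Q`. -/
noncomputable def hitExpGen {V : Type*} [Fintype V] [DecidableEq V]
    (Q : V → V → ℝ) (C : Finset V) (v : V) : ℝ≥0∞ :=
  ∑' t : ℕ, ENNReal.ofReal (hitSurviveGen Q C t v)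

/-- The single-walk auxiliary chain `Q(P,1)` on `V = {(y,S) : y ∈ S}`:
`Q((y,S),(z, S ∪ {z})) = P(y,z)`, and `0` otherwise. -/
def aux1 (P : Ω → Ω → ℝ) :
    {p : Ω × Finset Ω // p.1 ∈ p.2} → {p : Ω × Finset Ω // p.1 ∈ p.2} → ℝ :=
  fun v w => if w.1.2 = insert w.1.1 v.1.2 then P v.1.1 w.1.1 else 0

set_option linter.unusedSectionVars false

section Gen
variable {V : Type*} [Fintype V] [DecidableEq V]
variable (Q : V → V → ℝ) (C : Finset V)

lemma hsg_nonneg (hn : ∀ v w, 0 ≤ Q v w) : ∀ t v, 0 ≤ hitSurviveGen Q C t v := by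
  intro t
  induction t with
  | zero => intro v; simp only [hitSurviveGen]; split <;> norm_num
  | succ t ih =>
    intro v; simp only [hitSurviveGen]; split
    · exact le_refl 0
    · exact Finset.sum_nonneg fun w _ => mul_nonneg (hn v w) (ih w)

lemma hsg_mem (v : V) (hv : v ∈ C) (t : ℕ) : hitSurviveGen Q C t v = 0 := by
  cases t <;> simp [hitSurviveGen, hv]

lemma hExpGen_mem (v : V) (hv : v ∈ C) : hitExpGen Q C v = 0 := by
  simp [hitExpGen, hsg_mem Q C v hv]

lemma hExpGen_rec (hn : ∀ v w, 0 ≤ Q v w) (v : V) (hv : v ∉ C) :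
    hitExpGen Q C v = 1 + ∑ w, ENNReal.ofReal (Q v w) * hitExpGen Q C w := by
  have h0 : hitExpGen Q C v
      = ENNReal.ofReal (hitSurviveGen Q C 0 v)
        + ∑' t : ℕ, ENNReal.ofReal (hitSurviveGen Q C (t+1) v) :=
    tsum_eq_zero_add' ENNReal.summable
  rw [h0]
  congr 1
  · simp [hitSurviveGen, hv]
  · have hterm : ∀ t : ℕ, ENNReal.ofReal (hitSurviveGen Q C (t+1) v)
        = ∑ w, ENNReal.ofReal (Q v w) * ENNReal.ofReal (hitSurviveGen Q C t w) := by
      intro t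
      simp only [hitSurviveGen, if_neg hv]
      rw [ENNReal.ofReal_sum_of_nonneg fun w _ =>
        mul_nonneg (hn v w) (hsg_nonneg Q C hn t w)]
      exact Finset.sum_congr rfl fun w _ =>
        ENNReal.ofReal_mul (hn v w)
    calc ∑' t : ℕ, ENNReal.ofReal (hitSurviveGen Q C (t+1) v)
        = ∑' t : ℕ, ∑ w, ENNReal.ofReal (Q v w) * ENNReal.ofReal (hitSurviveGen Q C t w) := by
          exact tsum_congr hterm
      _ = ∑ w, ∑' t : ℕ, ENNReal.ofReal (Q v w) * ENNReal.ofReal (hitSurviveGen Q C t w) := by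
          exact Summable.tsum_finsetSum fun w _ => ENNReal.summable
      _ = ∑ w, ENNReal.ofReal (Q v w) * hitExpGen Q C w := by
          exact Finset.sum_congr rfl fun w _ => ENNReal.tsum_mul_left

lemma hsg_tendsto (v : V) (hv : hitExpGen Q C v ≠ ⊤) (hn : ∀ v w, 0 ≤ Q v w) :
    Filter.Tendsto (fun t => hitSurviveGen Q C t v) Filter.atTop (nhds 0) := by
  have h1 : Filter.Tendsto (fun t => ENNReal.ofReal (hitSurviveGen Q C t v))
      Filter.atTop (nhds 0) := ENNReal.tendsto_atTop_zero_of_tsum_ne_top hv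
  have h2 := (ENNReal.tendsto_toReal (by simp)).comp h1
  simp only [ENNReal.toReal_zero] at h2
  refine h2.congr fun t => ?_
  exact ENNReal.toReal_ofReal (hsg_nonneg Q C hn t v)

lemma rat_hitExpGen (hn : ∀ v w, 0 ≤ Q v w) (hs : ∀ v, ∑ w, Q v w = 1)
    (hr : ∀ v w, ∃ q : ℚ, Q v w = (q : ℝ)) (v₀ : V) (hfin : hitExpGen Q C v₀ ≠ ⊤) :
    ∃ q : ℚ, hitExpGen Q C v₀ = ENNReal.ofReal (q : ℝ) := by
  classical
  by_cases hv₀ : v₀ ∈ C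
  · exact ⟨0, by simp [hExpGen_mem Q C v₀ hv₀]⟩
  set h : V → ℝ≥0∞ := hitExpGen Q C with hh
  set g : V → ℝ := fun v => (h v).toReal with hg
  -- closure of the finite-expectation set
  have hclos : ∀ v, v ∉ C → h v ≠ ⊤ → ∀ w, Q v w ≠ 0 → h w ≠ ⊤ := by
    intro v hv hvfin w hw hwt
    apply hvfin
    rw [hh, hExpGen_rec Q C hn v hv, ENNReal.add_eq_top]
    right
    rw [← hh]
    refine (ENNReal.sum_eq_top).mpr ⟨w, Finset.mem_univ w, ?_⟩
    rw [hwt, ENNReal.mul_top]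
    exact fun h0 => hw (le_antisymm (by simpa [ENNReal.ofReal_eq_zero] using h0) (hn v w))
  have hgC : ∀ v ∈ C, g v = 0 := fun v hv => by simp [hg, hh, hExpGen_mem Q C v hv]
  have hgrec : ∀ v, v ∉ C → h v ≠ ⊤ → g v = 1 + ∑ w, Q v w * g w := by
    intro v hv hvfin
    have hrec : h v = 1 + ∑ w, ENNReal.ofReal (Q v w) * h w := hExpGen_rec Q C hn v hv
    have hsumfin : ∑ w, ENNReal.ofReal (Q v w) * h w ≠ ⊤ := by
      intro ht; apply hvfin; rw [hrec, ht, add_top]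
    have hterm : ∀ w ∈ (Finset.univ : Finset V), ENNReal.ofReal (Q v w) * h w ≠ ⊤ :=
      fun w hw => ((ENNReal.sum_lt_top.mp (lt_top_iff_ne_top.mpr hsumfin)) w hw).ne
    have : g v = (1 + ∑ w, ENNReal.ofReal (Q v w) * h w).toReal := by rw [hg]; rw [← hrec]
    rw [this, ENNReal.toReal_add (by simp) hsumfin, ENNReal.toReal_one,
      ENNReal.toReal_sum hterm]
    congr 1
    refine Finset.sum_congr rfl fun w _ => ?_
    by_cases hq : Q v w = 0
    · simp [hq]
    · rw [ENNReal.toReal_mul, ENNReal.toReal_ofReal (hn v w)]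
  -- the index set
  set p : V → Prop := fun v => h v ≠ ⊤ ∧ v ∉ C with hp
  have hp0 : p v₀ := ⟨hfin, hv₀⟩
  have hred : ∀ v, v ∉ C → h v ≠ ⊤ → ∀ (F : V → ℝ), (∀ w ∈ C, F w = 0) →
      ∑ w : Subtype p, Q v w.1 * F w.1 = ∑ w, Q v w * F w := by
    intro v hv hvfin F hF
    rw [← Finset.sum_subtype (Finset.univ.filter p) (by simp; exact fun x => Iff.rfl) (fun w => Q v w * F w)]
    refine Finset.sum_filter_of_ne fun w _ hne => ?_
    constructor
    · exact hclos v hv hvfin w fun h0 => hne (by simp [h0])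
    · exact fun hwC => hne (by simp [hF w hwC])
  -- matrices
  set M' : Matrix (Subtype p) (Subtype p) ℝ := Matrix.of fun i j => Q i.1 j.1 with hM'
  set M : Matrix (Subtype p) (Subtype p) ℝ := 1 - M' with hM
  have hmulvec : ∀ (A : Matrix (Subtype p) (Subtype p) ℝ) (x : Subtype p → ℝ) (i : Subtype p),
      A.mulVec x i = ∑ j, A i j * x j := by
    intro A x i; simp [Matrix.mulVec, dotProduct]
  have hMg : M.mulVec (fun i => g i.1) = fun _ => (1 : ℝ) := by
    funext i
    rw [hM, Matrix.sub_mulVec]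
    have h1 : M'.mulVec (fun j : Subtype p => g j.1) i = ∑ w, Q i.1 w * g w := by
      rw [hmulvec]
      exact hred i.1 i.2.2 i.2.1 g hgC
    have h2 := hgrec i.1 i.2.2 i.2.1
    simp only [Pi.sub_apply, Matrix.one_mulVec, h1]
    linarith
  -- nonnegativity of powers and row-sum bound
  have hpow_nonneg : ∀ t (i j : Subtype p), 0 ≤ (M' ^ t) i j := by
    intro t
    induction t with
    | zero => intro i j; rw [pow_zero, Matrix.one_apply]; split <;> norm_num
    | succ t ih =>
      intro i j
      rw [pow_succ, Matrix.mul_apply]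
      exact Finset.sum_nonneg fun k _ => mul_nonneg (ih i k) (hn _ _)
  have hrowt : ∀ t (i : Subtype p), ∑ j, (M' ^ t) i j ≤ hitSurviveGen Q C t i.1 := by
    intro t
    induction t with
    | zero =>
      intro i
      simp only [pow_zero, Matrix.one_apply, hitSurviveGen, if_neg i.2.2]
      rw [Finset.sum_ite_eq Finset.univ i (fun _ => (1:ℝ))]
      simp
    | succ t ih =>
      intro i
      have : ∀ j : Subtype p, (M' ^ (t+1)) i j = ∑ k, M' i k * (M' ^ t) k j := by
        intro j; rw [pow_succ', Matrix.mul_apply]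
      calc ∑ j, (M' ^ (t+1)) i j = ∑ j, ∑ k, M' i k * (M' ^ t) k j := by
            exact Finset.sum_congr rfl fun j _ => this j
        _ = ∑ k, M' i k * ∑ j, (M' ^ t) k j := by
            rw [Finset.sum_comm]
            exact Finset.sum_congr rfl fun k _ => (Finset.mul_sum _ _ _).symm
        _ ≤ ∑ k : Subtype p, Q i.1 k.1 * hitSurviveGen Q C t k.1 := by
            refine Finset.sum_le_sum fun k _ => ?_
            exact mul_le_mul_of_nonneg_left (ih k) (hn _ _)
        _ = ∑ w, Q i.1 w * hitSurviveGen Q C t w :=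
            hred i.1 i.2.2 i.2.1 _ (fun w hw => hsg_mem Q C w hw t)
        _ ≤ hitSurviveGen Q C (t+1) i.1 := by
            simp only [hitSurviveGen, if_neg i.2.2]
            exact le_refl _
  -- trivial kernel
  have hker : ∀ y : Subtype p → ℝ, M.mulVec y = 0 → y = 0 := by
    intro y hy
    have hy' : M'.mulVec y = y := by
      funext i
      have := congrFun hy i
      rw [hM, Matrix.sub_mulVec] at this
      simp only [Pi.sub_apply, Matrix.one_mulVec, Pi.zero_apply] at this
      linarith
    have hyt : ∀ t, (M' ^ t).mulVec y = y := by
      intro t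
      induction t with
      | zero => simp [Matrix.one_mulVec]
      | succ t ih => rw [pow_succ', ← Matrix.mulVec_mulVec, ih, hy']
    set B := ∑ j, |y j| with hB
    have hyB : ∀ j, |y j| ≤ B := by
      intro j
      rw [hB]
      exact Finset.single_le_sum (fun k _ => abs_nonneg (y k)) (Finset.mem_univ j)
    have hB0 : 0 ≤ B := Finset.sum_nonneg fun k _ => abs_nonneg _
    funext i
    have hbound : ∀ t, |y i| ≤ hitSurviveGen Q C t i.1 * B := by
      intro t
      calc |y i| = |(M' ^ t).mulVec y i| := by rw [hyt t]
        _ ≤ ∑ j, |(M' ^ t) i j * y j| := by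
            rw [hmulvec]
            exact Finset.abs_sum_le_sum_abs _ _
        _ ≤ ∑ j, (M' ^ t) i j * B := by
            refine Finset.sum_le_sum fun j _ => ?_
            rw [abs_mul, abs_of_nonneg (hpow_nonneg t i j)]
            exact mul_le_mul_of_nonneg_left (hyB j) (hpow_nonneg t i j)
        _ = (∑ j, (M' ^ t) i j) * B := (Finset.sum_mul _ _ _).symm
        _ ≤ hitSurviveGen Q C t i.1 * B := mul_le_mul_of_nonneg_right (hrowt t i) hB0
    have htend : Filter.Tendsto (fun t => hitSurviveGen Q C t i.1 * B)
        Filter.atTop (nhds 0) := by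
      have := (hsg_tendsto Q C i.1 i.2.1 hn).mul_const B
      simpa using this
    have h0 : |y i| ≤ 0 := ge_of_tendsto' htend hbound
    have := abs_nonneg (y i)
    simp only [Pi.zero_apply]
    have : |y i| = 0 := le_antisymm h0 this
    exact abs_eq_zero.mp this
  have hdet : M.det ≠ 0 := by
    intro hd
    obtain ⟨y, hy0, hy⟩ := Matrix.exists_mulVec_eq_zero_iff.mpr hd
    exact hy0 (hker y hy)
  -- rational matrix
  choose qQ hqQ using hr
  set Mq : Matrix (Subtype p) (Subtype p) ℚ :=
    1 - Matrix.of (fun i j : Subtype p => qQ i.1 j.1) with hMqdef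
  have hMq : Mq.map ((↑) : ℚ → ℝ) = M := by
    ext i j
    rw [hMqdef, hM, hM']
    simp only [Matrix.map_apply, Matrix.sub_apply, Matrix.one_apply, Matrix.of_apply]
    by_cases hij : i = j <;> simp [hij, hqQ]
  have hdetq : Mq.det ≠ 0 := by
    intro h0
    apply hdet
    rw [← hMq]
    have : (Mq.map ((↑) : ℚ → ℝ)).det = ((Mq.det : ℚ) : ℝ) := by
      rw [show Mq.map ((↑) : ℚ → ℝ) = (Rat.castHom ℝ).mapMatrix Mq from rfl]
      exact (RingHom.map_det (Rat.castHom ℝ) Mq).symm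
    rw [this, h0]
    norm_num
  have hMqunit : IsUnit Mq.det := isUnit_iff_ne_zero.mpr hdetq
  set xq : Subtype p → ℚ := Mq⁻¹.mulVec (fun _ => 1) with hxq
  have hx : (fun i : Subtype p => g i.1) = fun i => ((xq i : ℚ) : ℝ) := by
    have h1 : (Mq⁻¹.map ((↑) : ℚ → ℝ)).mulVec (M.mulVec (fun i : Subtype p => g i.1))
        = (Mq⁻¹.map ((↑) : ℚ → ℝ)).mulVec (fun _ => (1:ℝ)) := by rw [hMg]
    rw [Matrix.mulVec_mulVec] at h1
    have h2 : (Mq⁻¹.map ((↑) : ℚ → ℝ)) * M = 1 := by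
      rw [← hMq]
      have : (Mq⁻¹.map ((↑) : ℚ → ℝ)) * (Mq.map ((↑) : ℚ → ℝ))
          = ((Mq⁻¹ * Mq).map ((↑) : ℚ → ℝ)) := by
        exact (Matrix.map_mul (f := Rat.castHom ℝ)).symm
      rw [this, Matrix.nonsing_inv_mul Mq hMqunit, Matrix.map_one _ (by norm_num) (by norm_num)]
    rw [h2, Matrix.one_mulVec] at h1
    rw [h1]
    funext i
    simp only [Matrix.mulVec, dotProduct, Matrix.map_apply, hxq]
    push_cast
    ring
  refine ⟨xq ⟨v₀, hp0⟩, ?_⟩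
  have hgv : g v₀ = ((xq ⟨v₀, hp0⟩ : ℚ) : ℝ) := congrFun hx ⟨v₀, hp0⟩
  rw [← hgv, hg]
  exact (ENNReal.ofReal_toReal hfin).symm

end Gen

section Aux

variable (P : Ω → Ω → ℝ)

/-- embedding `z ↦ (z, insert z A)` -/
def embA (A : Finset Ω) (z : Ω) : {p : Ω × Finset Ω // p.1 ∈ p.2} :=
  ⟨(z, insert z A), Finset.mem_insert_self z A⟩

lemma embA_inj (A : Finset Ω) : Function.Injective (embA (Ω := Ω) A) := by
  intro a b hab
  have := congrArg (fun w => w.1.1) hab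
  exact this

lemma sum_aux1 (y : Ω) (A : Finset Ω) (hyA : y ∈ A)
    (F : {p : Ω × Finset Ω // p.1 ∈ p.2} → ℝ) :
    ∑ w, aux1 P ⟨(y, A), hyA⟩ w * F w = ∑ z, P y z * F (embA A z) := by
  have hzero : ∀ w ∈ Finset.univ \ Finset.univ.image (embA (Ω := Ω) A),
      aux1 P ⟨(y, A), hyA⟩ w * F w = 0 := by
    intro w hw
    rw [Finset.mem_sdiff, Finset.mem_image] at hw
    have hne : w.1.2 ≠ insert w.1.1 A := by
      intro heq
      exact hw.2 ⟨w.1.1, Finset.mem_univ _, by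
        apply Subtype.ext
        exact Prod.ext rfl heq.symm⟩
    simp [aux1, hne]
  rw [← Finset.sum_subset (Finset.subset_univ (Finset.univ.image (embA (Ω := Ω) A)))
    (fun w _ hw => hzero w (Finset.mem_sdiff.mpr ⟨Finset.mem_univ w, hw⟩))]
  rw [Finset.sum_image (fun a _ b _ hab => embA_inj A hab)]
  refine Finset.sum_congr rfl fun z _ => ?_
  simp [aux1, embA]

lemma cov_eq_gen (t : ℕ) : ∀ (y : Ω) (A : Finset Ω) (hyA : y ∈ A),
    covSurvive P t y A =
      hitSurviveGen (aux1 P)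
        (Finset.univ.filter fun v : {p : Ω × Finset Ω // p.1 ∈ p.2} => v.1.2 = Finset.univ)
        t ⟨(y, A), hyA⟩ := by
  induction t with
  | zero =>
    intro y A hyA
    simp [covSurvive, hitSurviveGen]
  | succ t ih =>
    intro y A hyA
    have hmem : (⟨(y, A), hyA⟩ : {p : Ω × Finset Ω // p.1 ∈ p.2}) ∈
        (Finset.univ.filter fun v : {p : Ω × Finset Ω // p.1 ∈ p.2} => v.1.2 = Finset.univ)
        ↔ A = Finset.univ := by simp
    by_cases hA : A = Finset.univ
    · simp [covSurvive, hitSurviveGen, hA]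
    · rw [show covSurvive P (t+1) y A = ∑ z, P y z * covSurvive P t z (insert z A) by
        simp [covSurvive, hA]]
      rw [show hitSurviveGen (aux1 P)
            (Finset.univ.filter
              fun v : {p : Ω × Finset Ω // p.1 ∈ p.2} => v.1.2 = Finset.univ) (t+1) ⟨(y, A), hyA⟩
          = ∑ w, aux1 P ⟨(y, A), hyA⟩ w * hitSurviveGen (aux1 P)
            (Finset.univ.filter
              fun v : {p : Ω × Finset Ω // p.1 ∈ p.2} => v.1.2 = Finset.univ) t w by
        simp [hitSurviveGen, hA]]
      rw [sum_aux1 P y A hyA]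
      exact Finset.sum_congr rfl fun z _ => by rw [ih z (insert z A) (Finset.mem_insert_self z A)]; rfl

end Aux


/-- For a rational finite chain with finite cover time from `x`, the cover time equals
the hitting time of `C = {(y,Ω) : y ∈ Ω}` in the auxiliary chain `Q(P,1)` started from
`(x,{x})`, and this value is rational. -/

theorem stmt19 (P : Ω → Ω → ℝ) (hP : IsStochastic P) (hQ : IsRationalKernel P)
    (x : Ω) (hx : covExp P x ≠ ⊤) :
    covExp P x =
      hitExpGen (aux1 P)
        (Finset.univ.filter fun v : {p : Ω × Finset Ω // p.1 ∈ p.2} => v.1.2 = Finset.univ)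
        ⟨(x, {x}), Finset.mem_singleton_self x⟩ ∧
      ∃ q : ℚ, covExp P x = ENNReal.ofReal (q : ℝ) := by
  classical
  have hC := Finset.univ.filter
    (fun v : {p : Ω × Finset Ω // p.1 ∈ p.2} => v.1.2 = Finset.univ)
  have heq : covExp P x =
      hitExpGen (aux1 P)
        (Finset.univ.filter fun v : {p : Ω × Finset Ω // p.1 ∈ p.2} => v.1.2 = Finset.univ)
        ⟨(x, {x}), Finset.mem_singleton_self x⟩ := by
    refine tsum_congr fun t => ?_
    rw [cov_eq_gen P t x {x} (Finset.mem_singleton_self x)]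
  refine ⟨heq, ?_⟩
  have hnn : ∀ v w, 0 ≤ aux1 P v w := by
    intro v w
    unfold aux1
    split
    · exact hP.1 _ _
    · exact le_refl 0
  have hsum : ∀ v : {p : Ω × Finset Ω // p.1 ∈ p.2}, ∑ w, aux1 P v w = 1 := by
    rintro ⟨⟨y, A⟩, hyA⟩
    have := sum_aux1 P y A hyA (fun _ => (1 : ℝ))
    simp only [mul_one] at this
    rw [this]
    exact hP.2 y
  have hrat : ∀ v w, ∃ q : ℚ, aux1 P v w = (q : ℝ) := by
    intro v w
    unfold aux1
    split
    · exact hQ _ _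
    · exact ⟨0, by norm_num⟩
  rw [heq] at hx ⊢
  exact rat_hitExpGen (aux1 P) _ hnn hsum hrat _ hx
end
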